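/- The Apéry numbers a_n = Σ_{k=0}^n (n choose k)² · ((n+k) choose k)² satisfy, for every integer n ≥ 0, the linear recurrence (n+2)³·a_{n+2} − (34n³ + 153n² + 231n + 117)·a_{n+1} + (n+1)³·a_n = 0. -/

import Mathlib

/-- The Apéry numbers `aₙ = Σ_{k=0}^n (n choose k)² ((n+k) choose k)²`. -/
def apery (n : ℕ) : ℤ :=
  ∑ k ∈ Finset.range (n + 1), ((n.choose k : ℤ)) ^ 2 * (((n + k).choose k : ℤ)) ^ 2

def Fq (n k : ℕ) : ℚ := ((n.choose k : ℚ)) ^ 2 * (((n + k).choose k : ℚ)) ^ 2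

def Gq (n k : ℕ) : ℚ :=
  4 * (2 * (n : ℚ) + 3) * ((k : ℚ) * (2 * k + 1) - (2 * (n : ℚ) + 3) ^ 2) * Fq (n + 1) k

def gq (n : ℕ) : ℕ → ℚ
  | 0 => 0
  | k + 1 => Gq n k

set_option maxHeartbeats 1000000 in
lemma main_case (n j : ℕ) (hkn : j + 1 ≤ n) :
    ((n : ℚ) + 2) ^ 3 * Fq (n + 2) (j+1)
      - (34 * (n : ℚ) ^ 3 + 153 * (n : ℚ) ^ 2 + 231 * (n : ℚ) + 117) * Fq (n + 1) (j+1)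
      + ((n : ℚ) + 1) ^ 3 * Fq n (j+1) = gq n ((j+1) + 1) - gq n (j+1) := by
  simp only [Fq, gq, Gq]
  rw [show n+1+(j+1) = n+j+2 from by omega, show n+2+(j+1) = n+j+3 from by omega,
      show n+(j+1) = n+j+1 from by omega, show n+1+j = n+j+1 from by omega]
  have hsub : ((n - j : ℕ) : ℚ) = (n:ℚ) - (j:ℚ) := by rw [Nat.cast_sub (by omega)]
  have hsub1 : ((n + 1 - j : ℕ) : ℚ) = (n:ℚ) + 1 - (j:ℚ) := by
    rw [Nat.cast_sub (by omega)]; push_cast; ring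
  have H1 : ((n+1).choose (j+1) : ℚ) * ((n:ℚ)-(j:ℚ)) = (n.choose (j+1) : ℚ) * ((n:ℚ)+1) := by
    have h := Nat.choose_mul_succ_eq n (j+1)
    rw [show n+1-(j+1) = n-j from by omega] at h
    have h2 := congrArg (fun x : ℕ => (x:ℚ)) h
    push_cast [hsub] at h2
    linarith
  have H2 : ((n+2).choose (j+1) : ℚ) * ((n:ℚ)+1-(j:ℚ)) = ((n+1).choose (j+1) : ℚ) * ((n:ℚ)+2) := by
    have h := Nat.choose_mul_succ_eq (n+1) (j+1)
    rw [show n+1+1-(j+1) = n+1-j from by omega, show n+1+1 = n+2 from rfl] at h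
    have h2 := congrArg (fun x : ℕ => (x:ℚ)) h
    push_cast [hsub1] at h2
    linarith
  have H3 : ((n+j+2).choose (j+1) : ℚ) * ((n:ℚ)+1) = ((n+j+1).choose (j+1) : ℚ) * ((n:ℚ)+(j:ℚ)+2) := by
    have h := Nat.choose_mul_succ_eq (n+j+1) (j+1)
    rw [show n+j+1+1-(j+1) = n+1 from by omega, show n+j+1+1 = n+j+2 from rfl] at h
    have h2 := congrArg (fun x : ℕ => (x:ℚ)) h
    push_cast at h2
    linarith
  have H4 : ((n+j+3).choose (j+1) : ℚ) * ((n:ℚ)+2) = ((n+j+2).choose (j+1) : ℚ) * ((n:ℚ)+(j:ℚ)+3) := by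
    have h := Nat.choose_mul_succ_eq (n+j+2) (j+1)
    rw [show n+j+2+1-(j+1) = n+2 from by omega, show n+j+2+1 = n+j+3 from rfl] at h
    have h2 := congrArg (fun x : ℕ => (x:ℚ)) h
    push_cast at h2
    linarith
  have H5 : ((n+1).choose j : ℚ) * ((n:ℚ)+1-(j:ℚ)) = ((n+1).choose (j+1) : ℚ) * ((j:ℚ)+1) := by
    have h := Nat.choose_succ_right_eq (n+1) j
    have h2 := congrArg (fun x : ℕ => (x:ℚ)) h
    push_cast [hsub1] at h2
    linarith
  have H6 : ((n+j+1).choose j : ℚ) * ((n:ℚ)+1) = ((n+j+1).choose (j+1) : ℚ) * ((j:ℚ)+1) := by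
    have h := Nat.choose_succ_right_eq (n+j+1) j
    rw [show n+j+1-j = n+1 from by omega] at h
    have h2 := congrArg (fun x : ℕ => (x:ℚ)) h
    push_cast at h2
    linarith
  set a := (n.choose (j+1) : ℚ) with ha
  set b := ((n+j+1).choose (j+1) : ℚ) with hb
  set c1 := ((n+1).choose (j+1) : ℚ) with hc1
  set c2 := ((n+2).choose (j+1) : ℚ) with hc2
  set d1 := ((n+j+2).choose (j+1) : ℚ) with hd1
  set d2 := ((n+j+3).choose (j+1) : ℚ) with hd2
  set e1 := ((n+1).choose j : ℚ) with he1
  set e2 := ((n+j+1).choose j : ℚ) with he2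
  push_cast
  have hjn : (j:ℚ) < (n:ℚ) := by exact_mod_cast (by omega : j < n)
  have h3 : (n:ℚ)+1 ≠ 0 := by positivity
  have h4 : (n:ℚ)+2 ≠ 0 := by positivity
  have K1 : c1*d1*((n:ℚ)-(j:ℚ)) = a*b*((n:ℚ)+(j:ℚ)+2) := by
    refine mul_left_cancel₀ h3 ?_
    linear_combination ((n:ℚ)+1)*d1*H1 + ((n:ℚ)+1)*a*H3
  have K2a : c2*d2*((n:ℚ)+1-(j:ℚ)) = c1*d1*((n:ℚ)+(j:ℚ)+3) := by
    refine mul_left_cancel₀ h4 ?_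
    linear_combination ((n:ℚ)+2)*d2*H2 + ((n:ℚ)+2)*c1*H4
  have K2 : c2*d2*(((n:ℚ)+1-(j:ℚ))*((n:ℚ)-(j:ℚ)))
      = a*b*(((n:ℚ)+(j:ℚ)+2)*((n:ℚ)+(j:ℚ)+3)) := by
    linear_combination ((n:ℚ)-(j:ℚ))*K2a + ((n:ℚ)+(j:ℚ)+3)*K1
  have K3a : e1*e2*(((n:ℚ)+1-(j:ℚ))*((n:ℚ)+1)) = c1*b*((j:ℚ)+1)^2 := by
    linear_combination ((n:ℚ)+1)*e2*H5 + ((j:ℚ)+1)*c1*H6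
  have K3 : e1*e2*(((n:ℚ)+1-(j:ℚ))*((n:ℚ)-(j:ℚ))) = a*b*((j:ℚ)+1)^2 := by
    refine mul_left_cancel₀ h3 ?_
    linear_combination ((n:ℚ)-(j:ℚ))*K3a + b*((j:ℚ)+1)^2*H1
  have hD : (((n:ℚ)+1-(j:ℚ))*((n:ℚ)-(j:ℚ)))^2 ≠ 0 := by
    have h1 : (n:ℚ)-(j:ℚ) ≠ 0 := by intro hc; linarith
    have h2 : (n:ℚ)+1-(j:ℚ) ≠ 0 := by intro hc; linarith
    positivity
  refine mul_left_cancel₀ hD ?_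
  linear_combination
    ((n:ℚ)+2)^3 * (c2*d2*(((n:ℚ)+1-(j:ℚ))*((n:ℚ)-(j:ℚ)))
        + a*b*(((n:ℚ)+(j:ℚ)+2)*((n:ℚ)+(j:ℚ)+3))) * K2
    + (-(34*(n:ℚ)^3+153*(n:ℚ)^2+231*(n:ℚ)+117)
        - 4*(2*(n:ℚ)+3)*(((j:ℚ)+1)*(2*(j:ℚ)+3)-(2*(n:ℚ)+3)^2)) * ((n:ℚ)+1-(j:ℚ))^2
        * (c1*d1*((n:ℚ)-(j:ℚ)) + a*b*((n:ℚ)+(j:ℚ)+2)) * K1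
    + 4*(2*(n:ℚ)+3)*((j:ℚ)*(2*(j:ℚ)+1)-(2*(n:ℚ)+3)^2)
        * (e1*e2*(((n:ℚ)+1-(j:ℚ))*((n:ℚ)-(j:ℚ))) + a*b*((j:ℚ)+1)^2) * K3


lemma row (m k : ℕ) (h : k ≤ m) :
    (((m+1).choose k : ℚ)) = (m.choose k : ℚ) * ((m:ℚ)+1) / ((m:ℚ)+1-(k:ℚ)) := by
  have hk : (k:ℚ) ≤ (m:ℚ) := by exact_mod_cast h
  have hne : (m:ℚ)+1-(k:ℚ) ≠ 0 := by intro hc; linarith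
  rw [eq_div_iff hne]
  have h2 := Nat.choose_mul_succ_eq m k
  have h3 : ((m + 1 - k : ℕ) : ℚ) = (m:ℚ)+1-(k:ℚ) := by
    rw [Nat.cast_sub (by omega)]; push_cast; ring
  have h4 : (m.choose k : ℚ) * ((m:ℚ)+1) = ((m+1).choose k : ℚ) * ((m:ℚ)+1-(k:ℚ)) := by
    rw [← h3]; exact_mod_cast h2
  linarith

lemma diag (m k : ℕ) (h : k < m) :
    ((m.choose k : ℚ)) = (m.choose (k+1) : ℚ) * ((k:ℚ)+1) / ((m:ℚ)-(k:ℚ)) := by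
  have hk : (k:ℚ) < (m:ℚ) := by exact_mod_cast h
  have hne : (m:ℚ)-(k:ℚ) ≠ 0 := by intro hc; linarith
  rw [eq_div_iff hne]
  have h2 := Nat.choose_succ_right_eq m k
  have h3 : ((m - k : ℕ) : ℚ) = (m:ℚ)-(k:ℚ) := by rw [Nat.cast_sub (by omega)]
  have h4 : (m.choose (k+1) : ℚ) * ((k:ℚ)+1) = (m.choose k : ℚ) * ((m:ℚ)-(k:ℚ)) := by
    rw [← h3]; exact_mod_cast h2
  linarith


lemma Fq_eq_zero {n k : ℕ} (h : n < k) : Fq n k = 0 := by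
  simp [Fq, Nat.choose_eq_zero_of_lt h]

set_option maxHeartbeats 1000000 in
lemma local_id (n k : ℕ) (hk : k ≤ n + 2) :
    ((n : ℚ) + 2) ^ 3 * Fq (n + 2) k
      - (34 * (n : ℚ) ^ 3 + 153 * (n : ℚ) ^ 2 + 231 * (n : ℚ) + 117) * Fq (n + 1) k
      + ((n : ℚ) + 1) ^ 3 * Fq n k = gq n (k + 1) - gq n k := by
  rcases Nat.eq_zero_or_pos k with rfl | hk1
  ·
    simp only [Fq, gq, Gq, Nat.choose_zero_right, Nat.add_zero, Nat.cast_one, Nat.cast_zero]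
    push_cast
    ring
  rcases le_or_gt k n with hkn | hkn
  · obtain ⟨j, rfl⟩ : ∃ j, k = j + 1 := ⟨k - 1, by omega⟩
    exact main_case n j hkn
  rcases (by omega : k = n + 1 ∨ k = n + 2) with rfl | rfl
  ·
    simp only [Fq, gq, Gq]
    rw [show n+2+(n+1) = (2*n+2)+1 from by omega, show n+1+(n+1) = 2*n+2 from by omega,
        show n+1+n = (2*n+1) from by omega]
    have hb : ((2*n+2).choose (n+1) : ℚ)
        = ((2*n+1).choose (n+1) : ℚ) * (2*(n:ℚ)+2) / ((n:ℚ)+1) := by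
      have := row (2*n+1) (n+1) (by omega)
      rw [show 2*n+1+1 = 2*n+2 from rfl] at this
      push_cast at this ⊢; convert this using 2 <;> ring
    have hc : (((2*n+2)+1).choose (n+1) : ℚ)
        = ((2*n+2).choose (n+1) : ℚ) * (2*(n:ℚ)+3) / ((n:ℚ)+2) := by
      have := row (2*n+2) (n+1) (by omega)
      push_cast at this ⊢; convert this using 2 <;> ring
    have hd : ((2*n+1).choose n : ℚ)
        = ((2*n+1).choose (n+1) : ℚ) * ((n:ℚ)+1) / ((n:ℚ)+1) := by
      have := diag (2*n+1) n (by omega); push_cast at this ⊢; convert this using 2 <;> ring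
    rw [hc, hb, hd, Nat.choose_self, Nat.choose_succ_self_right,
        Nat.choose_eq_zero_of_lt (show n < n+1 from by omega)]
    have h3 : (n:ℚ)+1 ≠ 0 := by positivity
    have h4 : (n:ℚ)+2 ≠ 0 := by positivity
    simp only [Nat.choose_self, Nat.choose_succ_self_right]
    push_cast
    field_simp
    ring
  ·
    simp only [Fq, gq, Gq]
    rw [show n+2+(n+2) = (2*n+3)+1 from by omega, show n+1+(n+2) = 2*n+3 from by omega,
        show n+(n+2) = 2*n+2 from by omega, show n+1+(n+1) = 2*n+2 from by omega]
    have hc : (((2*n+3)+1).choose (n+2) : ℚ)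
        = ((2*n+3).choose (n+2) : ℚ) * (2*(n:ℚ)+4) / ((n:ℚ)+2) := by
      have := row (2*n+3) (n+2) (by omega)
      push_cast at this ⊢; convert this using 2 <;> ring
    have hb : ((2*n+3).choose (n+2) : ℚ)
        = ((2*n+2).choose (n+2) : ℚ) * (2*(n:ℚ)+3) / ((n:ℚ)+1) := by
      have := row (2*n+2) (n+2) (by omega)
      rw [show 2*n+2+1 = 2*n+3 from rfl] at this
      push_cast at this ⊢; convert this using 2 <;> ring
    have hd : ((2*n+2).choose (n+1) : ℚ)
        = ((2*n+2).choose (n+2) : ℚ) * ((n:ℚ)+2) / ((n:ℚ)+1) := by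
      have := diag (2*n+2) (n+1) (by omega); push_cast at this ⊢; convert this using 2 <;> ring
    rw [hc, hb, hd, Nat.choose_self, Nat.choose_eq_zero_of_lt (show n+1 < n+2 from by omega),
        Nat.choose_eq_zero_of_lt (show n < n+2 from by omega)]
    have h3 : (n:ℚ)+1 ≠ 0 := by positivity
    have h4 : (n:ℚ)+2 ≠ 0 := by positivity
    simp only [Nat.choose_self, Nat.choose_succ_self_right]
    push_cast
    field_simp
    ring

lemma apery_cast (m n : ℕ) (h : m + 1 ≤ n + 3) :
    ((apery m : ℤ) : ℚ) = ∑ k ∈ Finset.range (n + 3), Fq m k := by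
  rw [apery]
  push_cast
  rw [Finset.sum_subset (Finset.range_subset_range.2 h)]
  · rfl
  · intro k hk hk'
    simp only [Finset.mem_range, not_lt] at hk'
    exact Fq_eq_zero (by omega)

/-- The Apéry numbers satisfy Apéry's recurrence
`(n+2)³·a_{n+2} − (34n³+153n²+231n+117)·a_{n+1} + (n+1)³·aₙ = 0`. -/
theorem apery_recurrence (n : ℕ) :
    ((n : ℤ) + 2) ^ 3 * apery (n + 2)
      - (34 * (n : ℤ) ^ 3 + 153 * (n : ℤ) ^ 2 + 231 * (n : ℤ) + 117) * apery (n + 1)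
      + ((n : ℤ) + 1) ^ 3 * apery n = 0 := by
  have key : ((n : ℚ) + 2) ^ 3 * ((apery (n+2) : ℤ) : ℚ)
      - (34 * (n : ℚ) ^ 3 + 153 * (n : ℚ) ^ 2 + 231 * (n : ℚ) + 117) * ((apery (n+1) : ℤ) : ℚ)
      + ((n : ℚ) + 1) ^ 3 * ((apery n : ℤ) : ℚ) = 0 := by
    rw [apery_cast (n+2) n (by omega), apery_cast (n+1) n (by omega),
      apery_cast n n (by omega), Finset.mul_sum, Finset.mul_sum, Finset.mul_sum,
      ← Finset.sum_sub_distrib, ← Finset.sum_add_distrib]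
    have : ∀ k ∈ Finset.range (n + 3),
        ((n : ℚ) + 2) ^ 3 * Fq (n + 2) k
          - (34 * (n : ℚ) ^ 3 + 153 * (n : ℚ) ^ 2 + 231 * (n : ℚ) + 117) * Fq (n + 1) k
          + ((n : ℚ) + 1) ^ 3 * Fq n k = gq n (k + 1) - gq n k := by
      intro k hk
      exact local_id n k (by simpa using Nat.lt_succ_iff.1 (Finset.mem_range.1 hk))
    rw [Finset.sum_congr rfl this, Finset.sum_range_sub (gq n)]
    have h0 : gq n 0 = 0 := rfl
    have h1 : gq n (n + 3) = Gq n (n + 2) := rfl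
    rw [h0, h1, Gq, Fq_eq_zero (by omega)]
    simp [Gq]
  exact_mod_cast key
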